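/- arXiv:2605.02587 — 2 statements merged into one kernel-verified Lean document; each statement's English description precedes it below -/
import Mathlib

section
/- Let Σ be a symmetric positive definite K×K real matrix with condition number κ = λ_max(Σ)/λ_min(Σ). Then for the induced correlation matrix R with entries R_{kk'} = Σ_{kk'}/√(Σ_{kk}Σ_{k'k'}), every off-diagonal entry satisfies |R_{kk'}| ≤ (κ−1)/(κ+1). -/
open Matrix

lemma quad_bounds {K : ℕ} (A : Matrix (Fin K) (Fin K) ℝ) (hA : A.IsHermitian)
    (lmin lmax : ℝ) (hlo : ∀ i, lmin ≤ hA.eigenvalues i) (hhi : ∀ i, hA.eigenvalues i ≤ lmax)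
    (x : Fin K → ℝ) :
    lmin * (x ⬝ᵥ x) ≤ x ⬝ᵥ (A *ᵥ x) ∧ x ⬝ᵥ (A *ᵥ x) ≤ lmax * (x ⬝ᵥ x) := by
  set U : Matrix (Fin K) (Fin K) ℝ := (hA.eigenvectorUnitary : Matrix (Fin K) (Fin K) ℝ) with hU
  have hstar : star U = Uᵀ := by
    rw [star_eq_conjTranspose, conjTranspose_eq_transpose_of_trivial]
  set y := Uᵀ *ᵥ x with hy
  have hxU : x ᵥ* U = y := by rw [hy, mulVec_transpose]
  have hquad : x ⬝ᵥ (A *ᵥ x) = ∑ i, hA.eigenvalues i * (y i)^2 := by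
    conv_lhs => rw [hA.spectral_theorem, Unitary.conjStarAlgAut_apply]
    rw [← mulVec_mulVec, ← mulVec_mulVec, dotProduct_mulVec, hxU, hstar, ← hy]
    simp only [dotProduct, mulVec_diagonal, Function.comp]
    refine Finset.sum_congr rfl fun i _ => ?_
    simp [sq]; ring
  have h1 : y ⬝ᵥ y = x ⬝ᵥ x := by
    rw [hy, dotProduct_mulVec, vecMul_transpose, mulVec_mulVec, ← hstar,
      (Matrix.mem_unitaryGroup_iff).mp hA.eigenvectorUnitary.2]
    simp
  have hnorm : x ⬝ᵥ x = ∑ i, (y i)^2 := by rw [← h1]; simp [dotProduct, sq]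
  constructor
  · rw [hquad, hnorm, Finset.mul_sum]
    exact Finset.sum_le_sum fun i _ => mul_le_mul_of_nonneg_right (hlo i) (sq_nonneg _)
  · rw [hquad, hnorm, Finset.mul_sum]
    exact Finset.sum_le_sum fun i _ => mul_le_mul_of_nonneg_right (hhi i) (sq_nonneg _)

/-- For a symmetric positive definite matrix `A`, every off-diagonal entry of the
induced correlation matrix is bounded by `(κ-1)/(κ+1)` where `κ = λmax/λmin`. -/
theorem stmt0 {K : ℕ} (A : Matrix (Fin K) (Fin K) ℝ) (hA : A.PosDef)
    (lmax lmin : ℝ)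
    (hmax : IsGreatest (Set.range hA.1.eigenvalues) lmax)
    (hmin : IsLeast (Set.range hA.1.eigenvalues) lmin)
    (k k' : Fin K) (hkk' : k ≠ k') :
    |A k k' / Real.sqrt (A k k * A k' k')| ≤ (lmax / lmin - 1) / (lmax / lmin + 1) := by
  have hlo : ∀ i, lmin ≤ hA.1.eigenvalues i := fun i => hmin.2 ⟨i, rfl⟩
  have hhi : ∀ i, hA.1.eigenvalues i ≤ lmax := fun i => hmax.2 ⟨i, rfl⟩
  have hlminpos : 0 < lmin := by
    obtain ⟨i, hi⟩ := hmin.1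
    exact hi ▸ hA.eigenvalues_pos i
  have hlmaxpos : 0 < lmax := by
    obtain ⟨i, hi⟩ := hmin.1
    exact lt_of_lt_of_le hlminpos (hi ▸ hhi i)
  have hminmax : lmin ≤ lmax := by
    obtain ⟨i, hi⟩ := hmin.1
    exact hi ▸ hhi i
  set a := A k k with hadef
  set b := A k' k' with hbdef
  set r := A k k' with hrdef
  have hdiag : ∀ j : Fin K, 0 < A j j := by
    intro j
    exact hA.diag_pos
  have ha : 0 < a := hdiag k
  have hb : 0 < b := hdiag k'
  have hsa : (0:ℝ) < Real.sqrt a := Real.sqrt_pos.mpr ha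
  have hsb : (0:ℝ) < Real.sqrt b := Real.sqrt_pos.mpr hb
  have hsab : Real.sqrt (a * b) = Real.sqrt a * Real.sqrt b := Real.sqrt_mul ha.le b
  have hsym : A k' k = r := by
    have := congrFun (congrFun hA.1 k') k
    simpa using this.symm
  set s : ℝ := 1/a + 1/b with hs
  have hspos : 0 < s := by positivity
  -- quadratic form values on the test vectors
  have key : ∀ c : ℝ, c * c = 1 →
      let x : Fin K → ℝ := (Pi.single k (1/Real.sqrt a) : Fin K → ℝ) + c • (Pi.single k' (1/Real.sqrt b) : Fin K → ℝ)
      (x ⬝ᵥ x = s ∧ x ⬝ᵥ (A *ᵥ x) = 2 + 2 * c * (r / Real.sqrt (a*b))) := by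
    intro c hc
    constructor
    · simp only [dotProduct_add, add_dotProduct, smul_dotProduct, dotProduct_smul,
        single_dotProduct, dotProduct_single, Pi.add_apply, Pi.smul_apply,
        Pi.single_eq_same, Pi.single_eq_of_ne hkk', Pi.single_eq_of_ne hkk'.symm,
        smul_eq_mul, hs]
      field_simp
      rw [Real.sq_sqrt ha.le, Real.sq_sqrt hb.le]
      linear_combination a * a * b * hc
    · simp only [mulVec_add, mulVec_smul, mulVec_single, dotProduct_add, add_dotProduct,
        smul_dotProduct, dotProduct_smul, single_dotProduct, dotProduct_single,
        Pi.add_apply, Pi.smul_apply, smul_eq_mul]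
      simp only [op_smul_eq_mul, col_apply]
      rw [hsab]
      rw [hsym, ← hadef, ← hbdef, ← hrdef]
      field_simp
      linear_combination (Real.sqrt a ^ 2 * b) * hc
        - Real.sqrt b ^ 2 * Real.sq_sqrt ha.le - Real.sqrt a ^ 2 * Real.sq_sqrt hb.le
  set t : ℝ := |r| / Real.sqrt (a*b) with ht
  have habs : |r / Real.sqrt (a * b)| = t := by
    rw [abs_div, abs_of_nonneg (Real.sqrt_nonneg _)]
  rw [habs]
  set c : ℝ := if 0 ≤ r then 1 else -1 with hcdef
  have hc2 : c * c = 1 := by by_cases h : 0 ≤ r <;> simp [hcdef, h]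
  have hcr : c * r = |r| := by
    by_cases h : 0 ≤ r
    · simp [hcdef, h, abs_of_nonneg h]
    · simp [hcdef, h, abs_of_neg (lt_of_not_ge h)]
  have hc2' : (-c) * (-c) = 1 := by rw [neg_mul_neg]; exact hc2
  obtain ⟨hn1, hq1⟩ := key c hc2
  obtain ⟨hn2, hq2⟩ := key (-c) hc2'
  have hub := (quad_bounds A hA.1 lmin lmax hlo hhi ((Pi.single k (1/Real.sqrt a) : Fin K → ℝ) + c • (Pi.single k' (1/Real.sqrt b) : Fin K → ℝ))).2
  rw [hn1, hq1] at hub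
  have hlb := (quad_bounds A hA.1 lmin lmax hlo hhi ((Pi.single k (1/Real.sqrt a) : Fin K → ℝ) + (-c) • (Pi.single k' (1/Real.sqrt b) : Fin K → ℝ))).1
  rw [hn2, hq2] at hlb
  -- hub : 2 + 2*c*(r/√(ab)) ≤ lmax * s ; hlb : lmin * s ≤ 2 + 2*(-c)*(r/√(ab))
  have hct : c * (r / Real.sqrt (a*b)) = t := by
    rw [ht, ← hcr]; ring
  have hub' : 2 + 2 * t ≤ lmax * s := by
    calc 2 + 2*t = 2 + 2 * c * (r / Real.sqrt (a*b)) := by rw [mul_assoc, hct]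
    _ ≤ lmax * s := hub
  have hlb' : lmin * s ≤ 2 - 2 * t := by
    calc lmin * s ≤ 2 + 2 * (-c) * (r / Real.sqrt (a*b)) := hlb
    _ = 2 - 2*t := by rw [show (2:ℝ) * (-c) = -(2*c) by ring, neg_mul, mul_assoc, hct]; ring
  have hmain : lmin * (2 + 2*t) ≤ lmax * (2 - 2*t) := by
    calc lmin * (2 + 2*t) ≤ lmin * (lmax * s) := by
          exact mul_le_mul_of_nonneg_left hub' hlminpos.le
    _ = lmax * (lmin * s) := by ring
    _ ≤ lmax * (2 - 2*t) := mul_le_mul_of_nonneg_left hlb' hlmaxpos.le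
  have hrhs : (lmax / lmin - 1) / (lmax / lmin + 1) = (lmax - lmin) / (lmax + lmin) := by
    rw [div_eq_div_iff (by positivity) (by positivity)]
    field_simp
  rw [hrhs, le_div_iff₀ (by positivity)]
  nlinarith [hmain]
end

section
/- Let U be Haar-distributed on the orthogonal group O(K), Λ = diag(λ_1,...,λ_K) independent of U with λ_i i.i.d. Inverse-Gamma(ν−1, 1/2), ν > 3, and Σ = UΛU^T. Then for k ≠ k', E[Σ_{kk'} (Σ^{-1})_{kk'}] = −1/((ν−2)(K+2)). -/
open MeasureTheory ProbabilityTheory Matrix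
open Set Real


lemma image_div_Ioi {β : ℝ} (hβ : 0 < β) : (fun x : ℝ => β / x) '' Ioi 0 = Ioi 0 := by
  ext y
  constructor
  · rintro ⟨x, hx, rfl⟩
    exact div_pos hβ hx
  · intro hy
    exact ⟨β / y, div_pos hβ hy, by field_simp⟩

lemma hasDeriv_div {β : ℝ} {x : ℝ} (hx : x ∈ Ioi (0:ℝ)) :
    HasDerivWithinAt (fun x : ℝ => β / x) (-(β * (x ^ 2)⁻¹)) (Ioi 0) x := by
  have h := ((hasDerivAt_inv (ne_of_gt hx)).const_mul β)
  simp only [div_eq_mul_inv] at *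
  rw [show -(β * (x ^ 2)⁻¹) = β * -(x ^ 2)⁻¹ by ring]
  exact h.hasDerivWithinAt

lemma injOn_div {β : ℝ} (hβ : 0 < β) : InjOn (fun x : ℝ => β / x) (Ioi 0) := by
  intro x hx y hy h
  have hx0 : x ≠ 0 := ne_of_gt hx
  have hy0 : y ≠ 0 := ne_of_gt hy
  field_simp at h
  exact h.symm

lemma key_eq {β s : ℝ} (hβ : 0 < β) (hs : 0 < s) (x : ℝ) (hx : x ∈ Ioi (0:ℝ)) :
    |(-(β * (x ^ 2)⁻¹))| • (Real.exp (-(β / x)) * (β / x) ^ (s - 1))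
      = β ^ s * (x ^ (-s - 1) * Real.exp (-β / x)) := by
  have hx0 : (0:ℝ) < x := hx
  have h1 : |(-(β * (x ^ 2)⁻¹))| = β * (x ^ 2)⁻¹ := by
    rw [abs_neg, abs_of_pos]; positivity
  rw [h1, smul_eq_mul]
  have h2 : (β / x) ^ (s - 1) = β ^ (s - 1) * x ^ (-(s - 1)) := by
    rw [Real.div_rpow hβ.le hx0.le, Real.rpow_neg hx0.le, div_eq_mul_inv]
  have h3 : (x ^ 2)⁻¹ = x ^ (-2 : ℝ) := by
    rw [← Real.rpow_natCast x 2, ← Real.rpow_neg hx0.le]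
    norm_num
  have hb2 : β * β ^ (s - 1) = β ^ s := by
    calc β * β ^ (s - 1) = β ^ (1:ℝ) * β ^ (s - 1) := by rw [Real.rpow_one]
      _ = β ^ (1 + (s - 1)) := (Real.rpow_add hβ _ _).symm
      _ = β ^ s := by norm_num
  have hx2 : x ^ (-2:ℝ) * x ^ (-(s - 1)) = x ^ (-s - 1) := by
    rw [← Real.rpow_add hx0]
    congr 1
    ring
  rw [h2, h3, ← hb2, ← hx2]
  ring

lemma invGamma_core_integral {β s : ℝ} (hβ : 0 < β) (hs : 0 < s) :
    ∫ x in Ioi (0:ℝ), x ^ (-s - 1) * Real.exp (-β / x) = β ^ (-s) * Real.Gamma s := by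
  have hsub := integral_image_eq_integral_abs_deriv_smul (f := fun x : ℝ => β / x)
    (f' := fun x => -(β * (x ^ 2)⁻¹)) measurableSet_Ioi (fun x hx => hasDeriv_div hx)
    (injOn_div hβ) (fun y => Real.exp (-y) * y ^ (s - 1))
  rw [image_div_Ioi hβ] at hsub
  rw [← Real.Gamma_eq_integral hs] at hsub
  have : ∫ x in Ioi (0:ℝ), |(-(β * (x ^ 2)⁻¹))| • (Real.exp (-(β / x)) * (β / x) ^ (s - 1))
      = ∫ x in Ioi (0:ℝ), β ^ s * (x ^ (-s - 1) * Real.exp (-β / x)) :=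
    setIntegral_congr_fun measurableSet_Ioi (fun x hx => key_eq hβ hs x hx)
  rw [this, integral_const_mul] at hsub
  have hb : (β : ℝ) ^ s ≠ 0 := (Real.rpow_pos_of_pos hβ s).ne'
  rw [Real.rpow_neg hβ.le]
  field_simp at hsub ⊢
  linarith [hsub]

lemma invGamma_core_integrable {β s : ℝ} (hβ : 0 < β) (hs : 0 < s) :
    IntegrableOn (fun x => x ^ (-s - 1) * Real.exp (-β / x)) (Ioi (0:ℝ)) := by
  have hiff := integrableOn_image_iff_integrableOn_abs_deriv_smul (f := fun x : ℝ => β / x)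
    (f' := fun x => -(β * (x ^ 2)⁻¹)) measurableSet_Ioi (fun x hx => hasDeriv_div hx)
    (injOn_div hβ) (fun y => Real.exp (-y) * y ^ (s - 1))
  rw [image_div_Ioi hβ] at hiff
  have h1 : IntegrableOn (fun x => |(-(β * (x ^ 2)⁻¹))| •
      (Real.exp (-(β / x)) * (β / x) ^ (s - 1))) (Ioi (0:ℝ)) :=
    hiff.mp (Real.GammaIntegral_convergent hs)
  have h2 : IntegrableOn (fun x => β ^ s * (x ^ (-s - 1) * Real.exp (-β / x))) (Ioi (0:ℝ)) :=
    h1.congr_fun (fun x hx => key_eq hβ hs x hx) measurableSet_Ioi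
  have hb : (β : ℝ) ^ s ≠ 0 := (Real.rpow_pos_of_pos hβ s).ne'
  have := h2.const_mul (β ^ s)⁻¹
  simp [← mul_assoc, inv_mul_cancel₀ hb] at this
  exact this


noncomputable def invGammaMeasure (α β : ℝ) : Measure ℝ :=
  (volume.restrict (Set.Ioi (0 : ℝ))).withDensity
    (fun x => ENNReal.ofReal
      (β ^ α / Real.Gamma α * x ^ (-(α + 1)) * Real.exp (-β / x)))

lemma invGamma_density_measurable (α β : ℝ) :
    Measurable (fun x : ℝ => β ^ α / Real.Gamma α * x ^ (-(α + 1)) * Real.exp (-β / x)) := by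
  apply Measurable.mul
  · exact (measurable_id.pow_const _).const_mul _
  · exact Real.measurable_exp.comp (measurable_const.div measurable_id)

lemma invGamma_ae_pos {α β : ℝ} : ∀ᵐ x ∂(invGammaMeasure α β), 0 < x := by
  rw [ae_iff]
  have h : {x : ℝ | ¬ 0 < x} = (Ioi (0:ℝ))ᶜ := by ext x; simp
  rw [h, invGammaMeasure, withDensity_apply _ (measurableSet_Ioi.compl),
    Measure.restrict_restrict measurableSet_Ioi.compl, Set.compl_inter_self]
  simp

lemma invGamma_moment {α β r : ℝ} (hβ : 0 < β) (hα : 0 < α) (hr : r < α)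
    {φ : ℝ → ℝ} (hφ : ∀ x ∈ Set.Ioi (0:ℝ), φ x = x ^ r) :
    Integrable φ (invGammaMeasure α β) ∧
    ∫ x, φ x ∂(invGammaMeasure α β) = β ^ r * Real.Gamma (α - r) / Real.Gamma α := by
  set c : ℝ := β ^ α / Real.Gamma α with hc
  have hΓ : 0 < Real.Gamma α := Real.Gamma_pos_of_pos hα
  have hcpos : 0 < c := div_pos (Real.rpow_pos_of_pos hβ α) hΓ
  set h : ℝ → ℝ := fun x => c * x ^ (-(α + 1)) * Real.exp (-β / x) with hh
  have hmeas : Measurable h := invGamma_density_measurable α β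
  have hmeas' : Measurable (fun x => (h x).toNNReal) := hmeas.real_toNNReal
  have hmid : invGammaMeasure α β
      = (volume.restrict (Ioi (0:ℝ))).withDensity
        (fun x => ((h x).toNNReal : ENNReal)) := rfl
  have hpt : ∀ x ∈ Ioi (0:ℝ), (h x).toNNReal • φ x
      = c * (x ^ (-(α - r) - 1) * Real.exp (-β / x)) := by
    intro x hx
    have hx0 : (0:ℝ) < x := hx
    have hpos : 0 ≤ h x := by
      have h1 : (0:ℝ) < x ^ (-(α + 1)) := Real.rpow_pos_of_pos hx0 _
      have h2 : (0:ℝ) < Real.exp (-β / x) := Real.exp_pos _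
      rw [hh]
      positivity
    rw [NNReal.smul_def, smul_eq_mul, Real.coe_toNNReal _ hpos, hφ x hx]
    have hxx : x ^ (-(α + 1)) * x ^ r = x ^ (-(α - r) - 1) := by
      rw [← Real.rpow_add hx0]
      congr 1
      ring
    calc h x * x ^ r = c * (x ^ (-(α + 1)) * x ^ r) * Real.exp (-β / x) := by rw [hh]; ring
      _ = c * (x ^ (-(α - r) - 1) * Real.exp (-β / x)) := by rw [hxx]; ring
  have hsar : 0 < α - r := by linarith
  constructor
  · rw [hmid, integrable_withDensity_iff_integrable_smul hmeas']
    have hint : IntegrableOn (fun x => c * (x ^ (-(α - r) - 1) * Real.exp (-β / x)))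
        (Ioi (0:ℝ)) := (invGamma_core_integrable hβ hsar).const_mul c
    exact hint.congr_fun (fun x hx => (hpt x hx).symm) measurableSet_Ioi
  · rw [hmid, integral_withDensity_eq_integral_smul hmeas',
      setIntegral_congr_fun measurableSet_Ioi hpt, integral_const_mul,
      invGamma_core_integral hβ hsar, hc]
    have hβα : (0:ℝ) < β ^ α := Real.rpow_pos_of_pos hβ α
    have hkey : β ^ α * β ^ (r - α) = β ^ r := by
      rw [← Real.rpow_add hβ]; congr 1; ring
    field_simp
    rw [show -(α - r) = r - α by ring, hkey]

instance {K : ℕ} : MeasurableSpace (Matrix (Fin K) (Fin K) ℝ) :=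
  inferInstanceAs (MeasurableSpace (Fin K → Fin K → ℝ))

/-- For `Σ = UΛUᵀ` with `U` Haar on `O(K)` (expressed through its almost-sure
orthogonality and its fourth-moment identities) independent of
`Λ = diag(λ_1,...,λ_K)` with `λ_i` i.i.d. Inverse-Gamma(ν−1, 1/2), `ν > 3`:
`E[Σ_{kk'}(Σ⁻¹)_{kk'}] = −1/((ν−2)(K+2))` for `k ≠ k'`. -/
theorem stmt12 {Ω : Type*} [MeasurableSpace Ω] (P : Measure Ω)
    [IsProbabilityMeasure P] {K : ℕ} (hK : 2 ≤ K) (ν : ℝ) (hν : 3 < ν)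
    (U : Ω → Matrix (Fin K) (Fin K) ℝ) (hU : Measurable U)
    (l : Fin K → Ω → ℝ) (hl : ∀ i, Measurable (l i))
    (hindep : IndepFun U (fun ω => fun i => l i ω) P)
    (hiid : iIndepFun l P)
    (hdist : ∀ i, P.map (l i) = invGammaMeasure (ν - 1) (1 / 2))
    (horth : ∀ᵐ ω ∂P, (U ω)ᵀ * U ω = 1)
    (k k' : Fin K) (hkk' : k ≠ k')
    (h4a : ∀ i, ∫ ω, (U ω k i) ^ 2 * (U ω k' i) ^ 2 ∂P
      = 1 / ((K : ℝ) * ((K : ℝ) + 2)))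
    (h4b : ∀ i j, i ≠ j →
      ∫ ω, U ω k i * U ω k' i * U ω k j * U ω k' j ∂P
        = -(1 / ((K : ℝ) * ((K : ℝ) - 1) * ((K : ℝ) + 2))))
    (S : Ω → Matrix (Fin K) (Fin K) ℝ)
    (hS : ∀ ω, S ω = U ω * Matrix.diagonal (fun i => l i ω) * (U ω)ᵀ) :
    ∫ ω, S ω k k' * (S ω)⁻¹ k k' ∂P = -(1 / ((ν - 2) * ((K : ℝ) + 2))) := by
  have hν2 : (0:ℝ) < ν - 2 := by linarith
  have hν1 : (0:ℝ) < ν - 1 := by linarith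
  -- moments of the inverse gamma distribution
  have hm1 := invGamma_moment (α := ν - 1) (β := 1/2) (r := 1) (by norm_num) hν1
    (by linarith) (φ := fun x => x) (fun x hx => (Real.rpow_one x).symm)
  have hm2 := invGamma_moment (α := ν - 1) (β := 1/2) (r := -1) (by norm_num) hν1
    (by linarith) (φ := fun x => x⁻¹) (fun x hx => (Real.rpow_neg_one x).symm)
  have hΓν2 : (0:ℝ) < Real.Gamma (ν - 2) := Real.Gamma_pos_of_pos (by linarith)
  have hΓν1 : Real.Gamma (ν - 1) = (ν - 2) * Real.Gamma (ν - 2) := by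
    have := Real.Gamma_add_one (s := ν - 2) (by positivity)
    rw [show ν - 2 + 1 = ν - 1 by ring] at this
    exact this
  have hv1 : ∫ x, x ∂(invGammaMeasure (ν - 1) (1/2)) = 1 / (2 * (ν - 2)) := by
    rw [hm1.2, Real.rpow_one, hΓν1, show ν - 1 - 1 = ν - 2 by ring]
    field_simp
  have hv2 : ∫ x, x⁻¹ ∂(invGammaMeasure (ν - 1) (1/2)) = 2 * (ν - 1) := by
    rw [hm2.2]
    have h1 : ((1:ℝ)/2) ^ (-1 : ℝ) = 2 := by
      rw [Real.rpow_neg_one]; norm_num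
    have h2 : Real.Gamma (ν - 1 - -1) = (ν - 1) * Real.Gamma (ν - 1) := by
      rw [show ν - 1 - -1 = (ν - 1) + 1 by ring]
      exact Real.Gamma_add_one hν1.ne'
    have hΓ1 : Real.Gamma (ν - 1) ≠ 0 := (Real.Gamma_pos_of_pos hν1).ne'
    rw [h1, h2]
    field_simp
  -- transfer to P
  have hLpos : ∀ i, ∀ᵐ ω ∂P, 0 < l i ω := by
    intro i
    have h0 : ∀ᵐ x ∂(P.map (l i)), 0 < x := by
      rw [hdist i]; exact invGamma_ae_pos
    exact (ae_map_iff (hl i).aemeasurable measurableSet_Ioi).mp h0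
  have hLint : ∀ i, Integrable (l i) P := by
    intro i
    have := hm1.1
    rw [← hdist i] at this
    exact (integrable_map_measure aestronglyMeasurable_id (hl i).aemeasurable).mp this
  have hLinvInt : ∀ i, Integrable (fun ω => (l i ω)⁻¹) P := by
    intro i
    have := hm2.1
    rw [← hdist i] at this
    exact (integrable_map_measure measurable_inv.aestronglyMeasurable
      (hl i).aemeasurable).mp this
  have hLval : ∀ i, ∫ ω, l i ω ∂P = 1 / (2 * (ν - 2)) := by
    intro i
    have h := integral_map (μ := P) (φ := l i) (hl i).aemeasurable (f := fun x : ℝ => x)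
      aestronglyMeasurable_id
    rw [hdist i] at h
    rw [← h, hv1]
  have hLinvVal : ∀ i, ∫ ω, (l i ω)⁻¹ ∂P = 2 * (ν - 1) := by
    intro i
    have h := integral_map (μ := P) (φ := l i) (hl i).aemeasurable (f := fun x : ℝ => x⁻¹)
      measurable_inv.aestronglyMeasurable
    rw [hdist i] at h
    rw [← h, hv2]
  -- measurability of matrix entries
  have mU : ∀ m i : Fin K, Measurable (fun ω => U ω m i) := fun m i =>
    (measurable_pi_apply i).comp ((measurable_pi_apply m).comp hU)
  -- a.e. bound on entries
  have hUbd : ∀ᵐ ω ∂P, ∀ m i : Fin K, |U ω m i| ≤ 1 := by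
    filter_upwards [horth] with ω hω
    intro m i
    have key : ∑ j, U ω j i ^ 2 = 1 := by
      have h := congrFun (congrFun hω i) i
      simpa [Matrix.mul_apply, Matrix.transpose_apply, Matrix.one_apply, sq] using h
    have h1 : U ω m i ^ 2 ≤ 1 := by
      rw [← key]
      exact Finset.single_le_sum (f := fun j => U ω j i ^ 2)
        (fun j _ => sq_nonneg _) (Finset.mem_univ m)
    exact (sq_le_one_iff_abs_le_one _).mp h1
  -- the expansion
  set T : Fin K → Fin K → Ω → ℝ := fun i j ω =>
    (U ω k i * U ω k' i * (U ω k j * U ω k' j)) * (l i ω * (l j ω)⁻¹) with hT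
  have hae : (fun ω => S ω k k' * (S ω)⁻¹ k k') =ᵐ[P] fun ω => ∑ i, ∑ j, T i j ω := by
    filter_upwards [horth, ae_all_iff.mpr hLpos] with ω hω hpos
    have hUinv : (U ω)⁻¹ = (U ω)ᵀ := Matrix.inv_eq_left_inv hω
    have hDinv : (Matrix.diagonal (fun i => l i ω))⁻¹
        = Matrix.diagonal (fun i => (l i ω)⁻¹) := by
      apply Matrix.inv_eq_left_inv
      rw [Matrix.diagonal_mul_diagonal]
      have heq : (fun i => (l i ω)⁻¹ * l i ω) = fun _ => (1:ℝ) :=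
        funext fun i => inv_mul_cancel₀ (hpos i).ne'
      rw [heq, Matrix.diagonal_one]
    have hSinv : (S ω)⁻¹ = U ω * Matrix.diagonal (fun i => (l i ω)⁻¹) * (U ω)ᵀ := by
      rw [hS ω, Matrix.mul_inv_rev, Matrix.mul_inv_rev, hDinv, hUinv,
        ← Matrix.transpose_nonsing_inv, hUinv, Matrix.transpose_transpose,
        ← Matrix.mul_assoc]
    have hentry : ∀ w : Fin K → ℝ,
        (U ω * Matrix.diagonal w * (U ω)ᵀ) k k' = ∑ i, U ω k i * w i * U ω k' i := by
      intro w
      simp only [Matrix.mul_apply, Matrix.transpose_apply, Matrix.diagonal_apply, mul_ite,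
        ite_mul, mul_zero, zero_mul, Finset.sum_ite_eq, Finset.sum_ite_eq', Finset.mem_univ,
        if_true]
    rw [hSinv, hS ω, hentry, hentry, Finset.sum_mul_sum]
    exact Finset.sum_congr rfl fun i _ => Finset.sum_congr rfl fun j _ => by ring
  -- integrability of terms
  have hlam : ∀ i j, Integrable (fun ω => l i ω * (l j ω)⁻¹) P := by
    intro i j
    rcases eq_or_ne i j with rfl | hne
    · apply (integrable_const (1:ℝ)).congr
      filter_upwards [hLpos i] with ω h
      exact (mul_inv_cancel₀ h.ne').symm
    · exact ((hiid.indepFun hne).comp measurable_id measurable_inv).integrable_mul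
        (hLint i) (hLinvInt j)
  have hTint : ∀ i j, Integrable (T i j) P := by
    intro i j
    apply Integrable.bdd_mul (c := 1) (hlam i j)
      ((((mU k i).mul (mU k' i)).mul ((mU k j).mul (mU k' j))).aestronglyMeasurable)
    filter_upwards [hUbd] with ω hb
    have h1 := hb k i; have h2 := hb k' i; have h3 := hb k j; have h4 := hb k' j
    have e : ‖U ω k i * U ω k' i * (U ω k j * U ω k' j)‖
        = |U ω k i| * |U ω k' i| * (|U ω k j| * |U ω k' j|) := by
      rw [Real.norm_eq_abs, abs_mul, abs_mul, abs_mul]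
    change ‖U ω k i * U ω k' i * (U ω k j * U ω k' j)‖ ≤ 1
    rw [e]
    have p1 : |U ω k i| * |U ω k' i| ≤ 1 := mul_le_one₀ h1 (abs_nonneg _) h2
    have p2 : |U ω k j| * |U ω k' j| ≤ 1 := mul_le_one₀ h3 (abs_nonneg _) h4
    exact mul_le_one₀ p1 (by positivity) p2
  -- value of each term
  have hval : ∀ i j, ∫ ω, T i j ω ∂P
      = if i = j then 1 / ((K : ℝ) * ((K : ℝ) + 2))
        else -(1 / ((K : ℝ) * ((K : ℝ) - 1) * ((K : ℝ) + 2)))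
          * ((1 / (2 * (ν - 2))) * (2 * (ν - 1))) := by
    intro i j
    rcases eq_or_ne i j with rfl | hne
    · rw [if_pos rfl, ← h4a i]
      apply integral_congr_ae
      filter_upwards [hLpos i] with ω h
      rw [hT]
      simp only
      rw [mul_inv_cancel₀ h.ne', mul_one]
      ring
    · rw [if_neg hne]
      have hFmeas : Measurable (fun M : Matrix (Fin K) (Fin K) ℝ =>
          M k i * M k' i * (M k j * M k' j)) := by
        have hm : ∀ a b : Fin K, Measurable (fun M : Matrix (Fin K) (Fin K) ℝ => M a b) :=
          fun a b => (measurable_pi_apply b).comp (measurable_pi_apply a)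
        exact ((hm k i).mul (hm k' i)).mul ((hm k j).mul (hm k' j))
      have hGmeas : Measurable (fun v : Fin K → ℝ => v i * (v j)⁻¹) :=
        (measurable_pi_apply i).mul (measurable_pi_apply j).inv
      have hind := hindep.comp hFmeas hGmeas
      have hsplit : ∫ ω, T i j ω ∂P
          = (∫ ω, U ω k i * U ω k' i * (U ω k j * U ω k' j) ∂P)
            * ∫ ω, l i ω * (l j ω)⁻¹ ∂P :=
        IndepFun.integral_fun_mul_eq_mul_integral hind
          ((((mU k i).mul (mU k' i)).mul ((mU k j).mul (mU k' j))).aestronglyMeasurable)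
          (((hl i).mul (hl j).inv).aestronglyMeasurable)
      have hUpart : ∫ ω, U ω k i * U ω k' i * (U ω k j * U ω k' j) ∂P
          = -(1 / ((K : ℝ) * ((K : ℝ) - 1) * ((K : ℝ) + 2))) := by
        rw [← h4b i j hne]
        congr 1
        funext ω
        ring
      have hLpart : ∫ ω, l i ω * (l j ω)⁻¹ ∂P
          = (∫ ω, l i ω ∂P) * ∫ ω, (l j ω)⁻¹ ∂P :=
        ((hiid.indepFun hne).comp measurable_id measurable_inv).integral_fun_mul_eq_mul_integral
          (hLint i).aestronglyMeasurable (hLinvInt j).aestronglyMeasurable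
      rw [hsplit, hUpart, hLpart, hLval i, hLinvVal j]
  -- put everything together
  rw [integral_congr_ae hae, integral_finset_sum _
    (fun i _ => integrable_finset_sum _ (fun j _ => hTint i j))]
  have hsum : ∀ i : Fin K, ∫ ω, ∑ j, T i j ω ∂P = ∑ j, ∫ ω, T i j ω ∂P :=
    fun i => integral_finset_sum _ (fun j _ => hTint i j)
  simp_rw [hsum, hval]
  -- evaluate the double sum
  set A : ℝ := 1 / ((K : ℝ) * ((K : ℝ) + 2)) with hA
  set B : ℝ := -(1 / ((K : ℝ) * ((K : ℝ) - 1) * ((K : ℝ) + 2)))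
    * ((1 / (2 * (ν - 2))) * (2 * (ν - 1))) with hB
  have hrow : ∀ i : Fin K, (∑ j, if i = j then A else B) = A + ((K:ℝ) - 1) * B := by
    intro i
    rw [← Finset.add_sum_erase _ _ (Finset.mem_univ i), if_pos rfl]
    congr 1
    rw [Finset.sum_congr rfl (fun j hj => if_neg (Finset.ne_of_mem_erase hj).symm),
      Finset.sum_const, Finset.card_erase_of_mem (Finset.mem_univ i), Finset.card_univ,
      Fintype.card_fin, nsmul_eq_mul, Nat.cast_sub (by omega), Nat.cast_one]
  simp_rw [hrow, Finset.sum_const, Finset.card_univ, Fintype.card_fin, nsmul_eq_mul]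
  have hK2 : (2:ℝ) ≤ (K:ℝ) := by exact_mod_cast hK
  have h0 : (K:ℝ) ≠ 0 := by linarith
  have h1 : (K:ℝ) - 1 ≠ 0 := by linarith
  have h2 : (K:ℝ) + 2 ≠ 0 := by linarith
  rw [hA, hB]
  field_simp
  ring
end
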